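/- Let V be a real inner product space and let v₁,…,v_n ∈ V. Among all r-dimensional subspaces W ⊆ span{v₁,…,v_n}, the sum of squared projection errors Σᵢ ‖vᵢ − P_W vᵢ‖² is minimized by the span of the top r eigenvectors of the Gram operator G = Σᵢ vᵢ ⊗ vᵢ, and the minimal value equals the sum of the eigenvalues of G beyond the r largest. -/

import Mathlib

open Finset
open RealInnerProductSpace

lemma aux_card_filter_lt {d r : ℕ} (hr : r ≤ d) :
    (Finset.univ.filter fun j : Fin d => (j : ℕ) < r).card = r := by
  have : (Finset.univ.filter fun j : Fin d => (j : ℕ) < r)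
      = Finset.univ.map (Fin.castLEEmb hr) := by
    ext j
    simp only [Finset.mem_filter, Finset.mem_univ, true_and, Finset.mem_map,
      Fin.coe_castLEEmb]
    constructor
    · intro h; exact ⟨⟨(j : ℕ), h⟩, rfl⟩
    · rintro ⟨k, -, rfl⟩; simpa using k.2
  rw [this, Finset.card_map, Finset.card_univ, Fintype.card_fin]

lemma aux_inf_dist_sq {V : Type*} [NormedAddCommGroup V] [InnerProductSpace ℝ V]
    {ι : Type*} [Fintype ι] {f : ι → V} (hf : Orthonormal ℝ f) (x : V) :
    ⨅ w : (Submodule.span ℝ (Set.range f)), ‖x - (w : V)‖ ^ 2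
      = ‖x‖ ^ 2 - ∑ k, (⟪f k, x⟫) ^ 2 := by
  have hnorm : ∀ c : ι → ℝ, ‖x - ∑ k, c k • f k‖ ^ 2
      = (‖x‖ ^ 2 - ∑ k, ⟪f k, x⟫ ^ 2) + ∑ k, (c k - ⟪f k, x⟫) ^ 2 := by
    intro c
    have h1 : ⟪x, ∑ k, c k • f k⟫ = ∑ k, c k * ⟪f k, x⟫ := by
      rw [inner_sum]
      exact Finset.sum_congr rfl fun k _ => by
        rw [real_inner_smul_right, real_inner_comm]
    have h2 : ‖∑ k, c k • f k‖ ^ 2 = ∑ k, (c k) ^ 2 := by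
      rw [← real_inner_self_eq_norm_sq, sum_inner]
      exact Finset.sum_congr rfl fun k _ => by
        rw [real_inner_smul_left, hf.inner_right_fintype, sq]
    have h3 : ∑ k, (c k - ⟪f k, x⟫) ^ 2
        = ∑ k, (c k) ^ 2 - 2 * ∑ k, c k * ⟪f k, x⟫ + ∑ k, ⟪f k, x⟫ ^ 2 := by
      rw [Finset.mul_sum, ← Finset.sum_sub_distrib, ← Finset.sum_add_distrib]
      exact Finset.sum_congr rfl fun k _ => by ring
    rw [norm_sub_sq_real, h1, h2, h3]; ring
  have hbdd : BddBelow (Set.range fun w : (Submodule.span ℝ (Set.range f)) =>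
      ‖x - (w : V)‖ ^ 2) := ⟨0, by rintro y ⟨w, rfl⟩; positivity⟩
  refine le_antisymm ?_ (le_ciInf fun w => ?_)
  · have hmem : (∑ k, ⟪f k, x⟫ • f k) ∈ Submodule.span ℝ (Set.range f) :=
      Submodule.sum_mem _ fun k _ =>
        Submodule.smul_mem _ _ (Submodule.subset_span ⟨k, rfl⟩)
    calc ⨅ w : (Submodule.span ℝ (Set.range f)), ‖x - (w : V)‖ ^ 2
        ≤ ‖x - ((⟨_, hmem⟩ : Submodule.span ℝ (Set.range f)) : V)‖ ^ 2 :=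
          ciInf_le hbdd _
      _ = ‖x‖ ^ 2 - ∑ k, ⟪f k, x⟫ ^ 2 := by rw [hnorm]; simp
  · obtain ⟨c, hc⟩ := (Submodule.mem_span_range_iff_exists_fun ℝ).mp w.2
    have : ‖x - (w : V)‖ ^ 2 = (‖x‖ ^ 2 - ∑ k, ⟪f k, x⟫ ^ 2)
        + ∑ k, (c k - ⟪f k, x⟫) ^ 2 := by rw [← hc, hnorm]
    rw [this]
    exact le_add_of_nonneg_right (Finset.sum_nonneg fun k _ => sq_nonneg _)

lemma aux_ky_fan {d r : ℕ} (hr : r ≤ d) (μ c : Fin d → ℝ) (hμa : Antitone μ)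
    (hμ0 : ∀ j, 0 ≤ μ j) (hc0 : ∀ j, 0 ≤ c j) (hc1 : ∀ j, c j ≤ 1)
    (hcs : ∑ j, c j = r) :
    ∑ j, μ j * c j ≤ ∑ j ∈ Finset.univ.filter (fun j : Fin d => (j : ℕ) < r), μ j := by
  classical
  set t : ℝ := if h : r < d then μ ⟨r, h⟩ else 0 with ht
  have ht0 : 0 ≤ t := by
    rw [ht]; split
    · exact hμ0 _
    · exact le_refl 0
  have htlow : ∀ j : Fin d, (j : ℕ) < r → t ≤ μ j := by
    intro j hj
    rw [ht]; split
    · exact hμa (by exact_mod_cast hj.le : j ≤ ⟨r, ‹_›⟩)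
    · exact hμ0 j
  have hthigh : ∀ j : Fin d, r ≤ (j : ℕ) → μ j ≤ t := by
    intro j hj
    have hrd : r < d := lt_of_le_of_lt hj j.2
    rw [ht, dif_pos hrd]
    exact hμa (by exact_mod_cast hj : (⟨r, hrd⟩ : Fin d) ≤ j)
  have hsplit := Finset.sum_filter_add_sum_filter_not Finset.univ
    (fun j : Fin d => (j : ℕ) < r) (fun j => μ j * c j)
  have hsplitc := Finset.sum_filter_add_sum_filter_not Finset.univ
    (fun j : Fin d => (j : ℕ) < r) c
  have hcard := aux_card_filter_lt hr
  -- bound the tail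
  have htail : ∑ j ∈ Finset.univ.filter (fun j : Fin d => ¬ (j : ℕ) < r), μ j * c j
      ≤ ∑ j ∈ Finset.univ.filter (fun j : Fin d => ¬ (j : ℕ) < r), t * c j :=
    Finset.sum_le_sum fun j hj => by
      have := hthigh j (not_lt.mp (Finset.mem_filter.mp hj).2)
      exact mul_le_mul_of_nonneg_right this (hc0 j)
  have htail2 : ∑ j ∈ Finset.univ.filter (fun j : Fin d => ¬ (j : ℕ) < r), t * c j
      = t * ((r : ℝ) - ∑ j ∈ Finset.univ.filter (fun j : Fin d => (j : ℕ) < r), c j) := by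
    rw [← Finset.mul_sum]
    congr 1
    linarith [hsplitc, hcs]
  have hhead : ∑ j ∈ Finset.univ.filter (fun j : Fin d => (j : ℕ) < r), (μ j * c j + t * (1 - c j))
      ≤ ∑ j ∈ Finset.univ.filter (fun j : Fin d => (j : ℕ) < r), μ j :=
    Finset.sum_le_sum fun j hj => by
      have h1 := htlow j (Finset.mem_filter.mp hj).2
      have h2 := hc1 j
      have h3 := hc0 j
      nlinarith
  have hexpand : ∑ j ∈ Finset.univ.filter (fun j : Fin d => (j : ℕ) < r), (μ j * c j + t * (1 - c j))
      = ∑ j ∈ Finset.univ.filter (fun j : Fin d => (j : ℕ) < r), μ j * c j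
        + t * ((r : ℝ) - ∑ j ∈ Finset.univ.filter (fun j : Fin d => (j : ℕ) < r), c j) := by
    rw [Finset.sum_add_distrib]
    congr 1
    rw [← Finset.mul_sum, Finset.sum_sub_distrib, Finset.sum_const, hcard]
    simp [mul_sub]
  linarith [htail, htail2, hhead, hexpand, hsplit]




/-- Let `V` be a real inner product space and `v₁,…,v_n ∈ V`. Among
all `r`-dimensional subspaces `W ⊆ span{v₁,…,v_n}`, the sum of squared projection
errors `Σᵢ ‖vᵢ − P_W vᵢ‖²` is minimized by the span of the top `r` eigenvectors of
the Gram operator `G = Σᵢ vᵢ ⊗ vᵢ`, and the minimal value equals the sum of the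
eigenvalues of `G` beyond the `r` largest.  (The squared projection error onto a
subspace `W` is expressed as the squared distance `⨅ w : W, ‖vᵢ − w‖²`.) -/
theorem pod_optimality
    {V : Type*} [NormedAddCommGroup V] [InnerProductSpace ℝ V]
    (n r : ℕ) (v : Fin n → V)
    (G : V → V) (hG : ∀ x, G x = ∑ i, (inner ℝ (v i) x : ℝ) • v i)
    (S : Submodule ℝ V) (hS : S = Submodule.span ℝ (Set.range v)) :
    ∃ (d : ℕ) (e : Fin d → V) (μ : Fin d → ℝ),
      Orthonormal ℝ e ∧
      (∀ j, G (e j) = μ j • e j) ∧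
      Antitone μ ∧
      Submodule.span ℝ (Set.range e) = S ∧
      (∀ W : Submodule ℝ V, W ≤ S → FiniteDimensional ℝ W →
        Module.finrank ℝ W = r →
        (∑ i, ⨅ w : Submodule.span ℝ (e '' {j | (j : ℕ) < r}),
            ‖v i - (w : V)‖ ^ 2) ≤
          ∑ i, ⨅ w : W, ‖v i - (w : V)‖ ^ 2) ∧
      (∑ i, ⨅ w : Submodule.span ℝ (e '' {j | (j : ℕ) < r}),
          ‖v i - (w : V)‖ ^ 2) =
        ∑ j ∈ Finset.univ.filter (fun j : Fin d => r ≤ (j : ℕ)), μ j := by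
  classical
  have hvS : ∀ i, v i ∈ S := fun i => hS ▸ Submodule.subset_span ⟨i, rfl⟩
  have hfin : FiniteDimensional ℝ S := by
    rw [hS]; exact FiniteDimensional.span_of_finite ℝ (Set.finite_range v)
  have hGmem : ∀ x : V, G x ∈ S := fun x => by
    rw [hG]; exact Submodule.sum_mem _ fun i _ => Submodule.smul_mem _ _ (hvS i)
  have hkey : ∀ x y : V, ⟪G x, y⟫ = ∑ i, ⟪v i, x⟫ * ⟪v i, y⟫ := fun x y => by
    rw [hG, sum_inner]
    exact Finset.sum_congr rfl fun i _ => real_inner_smul_left _ _ _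
  set T : S →ₗ[ℝ] S := {
    toFun := fun x => ⟨G x, hGmem x⟩
    map_add' := fun x y => by
      ext
      show G (x + y : V) = G x + G y
      rw [hG, hG, hG, ← Finset.sum_add_distrib]
      exact Finset.sum_congr rfl fun i _ => by rw [inner_add_right, add_smul]
    map_smul' := fun c x => by
      ext
      show G ((c : ℝ) • (x : V)) = c • G (x : V)
      rw [hG, hG, Finset.smul_sum]
      exact Finset.sum_congr rfl fun i _ => by
        rw [real_inner_smul_right, mul_smul] } with hTdef
  have hTcoe : ∀ x : S, (T x : V) = G x := fun x => rfl
  have hTsym : T.IsSymmetric := by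
    intro x y
    show ⟪(T x : V), (y : V)⟫ = ⟪(x : V), (T y : V)⟫
    rw [hTcoe, hTcoe, hkey, real_inner_comm, hkey]
    exact Finset.sum_congr rfl fun i _ => mul_comm _ _
  set d := Module.finrank ℝ S with hd
  set b := hTsym.eigenvectorBasis hd.symm with hb
  set lam := hTsym.eigenvalues hd.symm with hlam
  have hblam : ∀ i, T (b i) = lam i • b i := fun i =>
    (hTsym.hasEigenvector_eigenvectorBasis hd.symm i).apply_eq_smul
  set σ := Tuple.sort (fun j => -(lam j)) with hσ
  set E : Fin d → V := fun j => (b (σ j) : V) with hE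
  set μ : Fin d → ℝ := fun j => lam (σ j) with hμ
  have hanti : Antitone μ := by
    intro a a' haa'
    have := Tuple.monotone_sort (fun j => -(lam j)) haa'
    simp only [Function.comp_apply] at this
    simpa [hμ] using neg_le_neg_iff.mp this
  have honE : Orthonormal ℝ E := by
    have h1 : Orthonormal ℝ (fun j => b (σ j)) := b.orthonormal.comp _ σ.injective
    exact (S.subtypeₗᵢ.orthonormal_comp_iff).mpr h1
  have hGE : ∀ j, G (E j) = μ j • E j := fun j => by
    have := congrArg (Subtype.val) (hblam (σ j))
    simpa [hE, hμ, hTcoe] using this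
  have hspan : Submodule.span ℝ (Set.range E) = S := by
    have h1 : Set.range E = S.subtype '' Set.range (⇑b) := by
      rw [hE]
      ext x
      constructor
      · rintro ⟨j, rfl⟩; exact ⟨b (σ j), ⟨σ j, rfl⟩, rfl⟩
      · rintro ⟨y, ⟨j, rfl⟩, rfl⟩; exact ⟨σ.symm j, by simp⟩
    rw [h1, Submodule.span_image, ← OrthonormalBasis.coe_toBasis b, b.toBasis.span_eq,
      Submodule.map_subtype_top]
  -- expansion in the eigenbasis
  have hexp : ∀ x : V, x ∈ S → ∑ j, ⟪E j, x⟫ • E j = x := by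
    intro x hx
    obtain ⟨c, hc⟩ := (Submodule.mem_span_range_iff_exists_fun ℝ).mp
      (hspan ▸ hx : x ∈ Submodule.span ℝ (Set.range E))
    have hcoef : ∀ j, ⟪E j, x⟫ = c j := fun j => by
      rw [← hc]; exact honE.inner_right_fintype c j
    simp_rw [hcoef]; exact hc
  have hnormsq : ∀ x : V, x ∈ S → ‖x‖ ^ 2 = ∑ j, ⟪E j, x⟫ ^ 2 := by
    intro x hx
    have h1 : ⟪(∑ j, ⟪E j, x⟫ • E j), x⟫ = ⟪x, x⟫ := by rw [hexp x hx]
    rw [← real_inner_self_eq_norm_sq, ← h1, sum_inner]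
    exact Finset.sum_congr rfl fun j _ => by rw [real_inner_smul_left, sq]
  have hmuval : ∀ j, μ j = ∑ i, ⟪v i, E j⟫ ^ 2 := by
    intro j
    have h1 : ⟪G (E j), E j⟫ = μ j := by
      rw [hGE j, real_inner_smul_left, real_inner_self_eq_norm_sq, honE.1 j]
      simp
    rw [← h1, hkey]
    exact Finset.sum_congr rfl fun i _ => (sq _).symm
  have hμ0 : ∀ j, 0 ≤ μ j := fun j =>
    (hmuval j) ▸ Finset.sum_nonneg fun i _ => sq_nonneg _
  have htrace : ∑ i, ‖v i‖ ^ 2 = ∑ j, μ j := by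
    calc ∑ i, ‖v i‖ ^ 2 = ∑ i, ∑ j, ⟪E j, v i⟫ ^ 2 :=
          Finset.sum_congr rfl fun i _ => hnormsq (v i) (hvS i)
      _ = ∑ j, ∑ i, ⟪E j, v i⟫ ^ 2 := Finset.sum_comm
      _ = ∑ j, μ j := Finset.sum_congr rfl fun j _ => by
          rw [hmuval j]
          exact Finset.sum_congr rfl fun i _ => by rw [real_inner_comm]
  have hGlin : ∀ c : Fin d → ℝ, G (∑ j, c j • E j) = ∑ j, c j • G (E j) := by
    intro c
    rw [hG]
    have h1 : ∀ i : Fin n, ⟪v i, ∑ j, c j • E j⟫ • v i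
        = ∑ j, (c j * ⟪v i, E j⟫) • v i := by
      intro i
      rw [inner_sum, Finset.sum_smul]
      exact Finset.sum_congr rfl fun j _ => by rw [real_inner_smul_right]
    calc ∑ i, ⟪v i, ∑ j, c j • E j⟫ • v i = ∑ i, ∑ j, (c j * ⟪v i, E j⟫) • v i :=
          Finset.sum_congr rfl fun i _ => h1 i
      _ = ∑ j, ∑ i, (c j * ⟪v i, E j⟫) • v i := Finset.sum_comm
      _ = ∑ j, c j • G (E j) := Finset.sum_congr rfl fun j _ => by
          rw [hG, Finset.smul_sum]
          exact Finset.sum_congr rfl fun i _ => by rw [mul_smul]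
  have hquad : ∀ w : V, w ∈ S → ∑ i, ⟪v i, w⟫ ^ 2 = ∑ j, μ j * ⟪E j, w⟫ ^ 2 := by
    intro w hw
    have h1 : ∑ i, ⟪v i, w⟫ ^ 2 = ⟪G w, w⟫ := by
      rw [hkey]; exact Finset.sum_congr rfl fun i _ => sq _
    have h2 : G w = ∑ j, ⟪E j, w⟫ • μ j • E j := by
      conv_lhs => rw [← hexp w hw, hGlin]
      exact Finset.sum_congr rfl fun j _ => by rw [hGE j]
    rw [h1, h2, sum_inner]
    exact Finset.sum_congr rfl fun j _ => by
      rw [real_inner_smul_left, real_inner_smul_left]; ring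
  -- the value on the span of the top-r eigenvectors
  have hsetr : (Submodule.span ℝ (E '' {j | (j : ℕ) < r}))
      = Submodule.span ℝ (Set.range fun k : {j : Fin d // (j : ℕ) < r} => E k.1) := by
    rw [Set.image_eq_range]; rfl
  have hon' : Orthonormal ℝ (fun k : {j : Fin d // (j : ℕ) < r} => E k.1) :=
    honE.comp _ Subtype.val_injective
  have hLHS : (∑ i, ⨅ w : Submodule.span ℝ (E '' {j | (j : ℕ) < r}), ‖v i - (w : V)‖ ^ 2)
      = ∑ i, ‖v i‖ ^ 2 - ∑ j ∈ Finset.univ.filter (fun j : Fin d => (j : ℕ) < r), μ j := by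
    have h1 : ∀ i, (⨅ w : Submodule.span ℝ (E '' {j | (j : ℕ) < r}), ‖v i - (w : V)‖ ^ 2)
        = ‖v i‖ ^ 2 - ∑ k : {j : Fin d // (j : ℕ) < r}, ⟪E k.1, v i⟫ ^ 2 := by
      intro i
      rw [hsetr]
      exact aux_inf_dist_sq hon' (v i)
    have h2 : ∀ i, ∑ k : {j : Fin d // (j : ℕ) < r}, ⟪E k.1, v i⟫ ^ 2
        = ∑ j ∈ Finset.univ.filter (fun j : Fin d => (j : ℕ) < r), ⟪E j, v i⟫ ^ 2 := fun i =>
      (Finset.sum_subtype (Finset.univ.filter fun j : Fin d => (j : ℕ) < r)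
        (fun x => by simp) (fun j => ⟪E j, v i⟫ ^ 2)).symm
    calc (∑ i, ⨅ w : Submodule.span ℝ (E '' {j | (j : ℕ) < r}), ‖v i - (w : V)‖ ^ 2)
        = ∑ i, (‖v i‖ ^ 2
            - ∑ j ∈ Finset.univ.filter (fun j : Fin d => (j : ℕ) < r), ⟪E j, v i⟫ ^ 2) :=
          Finset.sum_congr rfl fun i _ => by rw [h1 i, h2 i]
      _ = ∑ i, ‖v i‖ ^ 2
            - ∑ i, ∑ j ∈ Finset.univ.filter (fun j : Fin d => (j : ℕ) < r), ⟪E j, v i⟫ ^ 2 :=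
          Finset.sum_sub_distrib _ _
      _ = ∑ i, ‖v i‖ ^ 2 - ∑ j ∈ Finset.univ.filter (fun j : Fin d => (j : ℕ) < r), μ j := by
          congr 1
          rw [Finset.sum_comm]
          exact Finset.sum_congr rfl fun j _ => by
            rw [hmuval j]
            exact Finset.sum_congr rfl fun i _ => by rw [real_inner_comm]
  -- the equality clause
  have heq : (∑ i, ⨅ w : Submodule.span ℝ (E '' {j | (j : ℕ) < r}), ‖v i - (w : V)‖ ^ 2)
      = ∑ j ∈ Finset.univ.filter (fun j : Fin d => r ≤ (j : ℕ)), μ j := by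
    rw [hLHS, htrace]
    have hsplit := Finset.sum_filter_add_sum_filter_not Finset.univ
      (fun j : Fin d => (j : ℕ) < r) μ
    have hnot : Finset.univ.filter (fun j : Fin d => ¬ (j : ℕ) < r)
        = Finset.univ.filter (fun j : Fin d => r ≤ (j : ℕ)) :=
      Finset.filter_congr fun j _ => by simp [not_lt]
    rw [← hsplit, hnot]; ring
  -- the optimality clause
  have hineq : ∀ W : Submodule ℝ V, W ≤ S → FiniteDimensional ℝ W →
      Module.finrank ℝ W = r →
      (∑ i, ⨅ w : Submodule.span ℝ (E '' {j | (j : ℕ) < r}), ‖v i - (w : V)‖ ^ 2)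
        ≤ ∑ i, ⨅ w : W, ‖v i - (w : V)‖ ^ 2 := by
    intro W hWS hWfin hWrank
    have hrd : r ≤ d := by
      rw [← hWrank, hd]; exact Submodule.finrank_mono hWS
    set u : Fin r → V :=
      fun k => ((stdOrthonormalBasis ℝ W) (Fin.cast hWrank.symm k) : V) with hu
    have humem : ∀ k, u k ∈ S := fun k => hWS ((stdOrthonormalBasis ℝ W) _).2
    have huon : Orthonormal ℝ u := by
      have h1 : Orthonormal ℝ
          (fun k : Fin r => (stdOrthonormalBasis ℝ W) (Fin.cast hWrank.symm k)) :=
        (stdOrthonormalBasis ℝ W).orthonormal.comp _ (Fin.cast_injective _)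
      exact (W.subtypeₗᵢ.orthonormal_comp_iff).mpr h1
    have hspanW : Submodule.span ℝ (Set.range u) = W := by
      have h1 : Set.range u = W.subtype '' Set.range ⇑(stdOrthonormalBasis ℝ W) := by
        ext x; constructor
        · rintro ⟨k, rfl⟩; exact ⟨_, ⟨_, rfl⟩, rfl⟩
        · rintro ⟨y, ⟨j, rfl⟩, rfl⟩; exact ⟨Fin.cast hWrank j, by simp [hu]⟩
      rw [h1, Submodule.span_image, ← OrthonormalBasis.coe_toBasis, Module.Basis.span_eq,
        Submodule.map_subtype_top]
    have hRHS : (∑ i, ⨅ w : W, ‖v i - (w : V)‖ ^ 2)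
        = ∑ i, ‖v i‖ ^ 2 - ∑ k, ∑ i, ⟪u k, v i⟫ ^ 2 := by
      rw [← hspanW]
      calc (∑ i, ⨅ w : Submodule.span ℝ (Set.range u), ‖v i - (w : V)‖ ^ 2)
          = ∑ i, (‖v i‖ ^ 2 - ∑ k, ⟪u k, v i⟫ ^ 2) :=
            Finset.sum_congr rfl fun i _ => aux_inf_dist_sq huon (v i)
        _ = ∑ i, ‖v i‖ ^ 2 - ∑ i, ∑ k, ⟪u k, v i⟫ ^ 2 := Finset.sum_sub_distrib _ _
        _ = ∑ i, ‖v i‖ ^ 2 - ∑ k, ∑ i, ⟪u k, v i⟫ ^ 2 := by rw [Finset.sum_comm]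
    set c : Fin d → ℝ := fun j => ∑ k, ⟪E j, u k⟫ ^ 2 with hc
    have hc0 : ∀ j, 0 ≤ c j := fun j => Finset.sum_nonneg fun k _ => sq_nonneg _
    have hc1 : ∀ j, c j ≤ 1 := by
      intro j
      calc c j = ∑ k, ‖⟪u k, E j⟫‖ ^ 2 := Finset.sum_congr rfl fun k _ => by
            rw [Real.norm_eq_abs, sq_abs, real_inner_comm]
        _ ≤ ‖E j‖ ^ 2 := huon.sum_inner_products_le (x := E j)
        _ = 1 := by rw [honE.1 j]; norm_num
    have hcs : ∑ j, c j = (r : ℝ) := by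
      calc ∑ j, c j = ∑ k, ∑ j, ⟪E j, u k⟫ ^ 2 := Finset.sum_comm
        _ = ∑ k : Fin r, (1 : ℝ) := Finset.sum_congr rfl fun k _ => by
            rw [← hnormsq (u k) (humem k), huon.1 k]; norm_num
        _ = (r : ℝ) := by simp
    have hmid : ∑ k, ∑ i, ⟪u k, v i⟫ ^ 2 = ∑ j, μ j * c j := by
      calc ∑ k, ∑ i, ⟪u k, v i⟫ ^ 2 = ∑ k, ∑ j, μ j * ⟪E j, u k⟫ ^ 2 :=
            Finset.sum_congr rfl fun k _ => by
              rw [← hquad (u k) (humem k)]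
              exact Finset.sum_congr rfl fun i _ => by rw [real_inner_comm]
        _ = ∑ j, ∑ k, μ j * ⟪E j, u k⟫ ^ 2 := Finset.sum_comm
        _ = ∑ j, μ j * c j := Finset.sum_congr rfl fun j _ => (Finset.mul_sum _ _ _).symm
    have hkf := aux_ky_fan hrd μ c hanti hμ0 hc0 hc1 hcs
    rw [hLHS, hRHS]
    have : ∑ k, ∑ i, ⟪u k, v i⟫ ^ 2
        ≤ ∑ j ∈ Finset.univ.filter (fun j : Fin d => (j : ℕ) < r), μ j := by
      rw [hmid]; exact hkf
    linarith
  exact ⟨d, E, μ, honE, hGE, hanti, hspan, hineq, heq⟩
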